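/- Gaussian aperture integral: for positive reals b_eff, L, L_y−L, ω, c₀ and points x_q, y ∈ ℝ², define α = ω²b_eff²/(4c₀²L²) and β = ωL_y/(2c₀L(L_y−L)). Then ∫_{ℝ²} exp(iω|y−x|²/(2c₀(L_y−L))) · exp(iω(|x|²−|x_q|²)/(2c₀L)) · exp(−α|x−x_q|²) dx = π/(α − iβ) · exp( −(ω²/(4c₀²))|x_q/L + (x_q−y)/(L_y−L)|²/(α − iβ) + iω|x_q−y|²/(2c₀(L_y−L)) ). -/

import Mathlib

open Complex Real MeasureTheory

lemma aux_gauss2 (B : ℂ) (hB : 0 < B.re) (c₁ c₂ : ℂ) (w₁ w₂ : EuclideanSpace ℝ (Fin 2)) :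
    (∫ v : EuclideanSpace ℝ (Fin 2),
      Complex.exp (-B * ((‖v‖ : ℝ) : ℂ) ^ 2 + (c₁ * (((inner ℝ w₁ v : ℝ) : ℝ) : ℂ) + c₂ * (((inner ℝ w₂ v : ℝ) : ℝ) : ℂ))))
    = (π : ℂ) / B * Complex.exp ((c₁ ^ 2 * ((‖w₁‖ : ℝ) : ℂ) ^ 2
        + 2 * c₁ * c₂ * (((inner ℝ w₁ w₂ : ℝ) : ℝ) : ℂ) + c₂ ^ 2 * ((‖w₂‖ : ℝ) : ℂ) ^ 2) / (4 * B)) := by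
  have hBne : B ≠ 0 := fun h => by simp [h] at hB
  have hme := (EuclideanSpace.volume_preserving_symm_measurableEquiv_toLp (Fin 2)).symm
  rw [← hme.integral_comp (MeasurableEquiv.measurableEmbedding _)]
  have key := GaussianFourier.integral_cexp_neg_sum_mul_add (ι := Fin 2) (b := fun _ : Fin 2 ↦ B)
      (fun _ ↦ hB) (fun i ↦ c₁ * (w₁ i : ℂ) + c₂ * (w₂ i : ℂ))
  have hnorm : ∀ w : EuclideanSpace ℝ (Fin 2), (‖w‖ : ℝ) ^ 2 = ∑ i, w i ^ 2 := by
    intro w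
    rw [EuclideanSpace.norm_eq, Real.sq_sqrt (by positivity)]
    simp [sq_abs]
  have hinner : ∀ w v : EuclideanSpace ℝ (Fin 2), (inner ℝ w v : ℝ) = ∑ i, w i * v i := by
    intro w v
    simp [PiLp.inner_apply, mul_comm]
  have hnormC : ∀ w : EuclideanSpace ℝ (Fin 2), ((‖w‖ : ℝ) : ℂ) ^ 2 = ∑ i, ((w i : ℝ) : ℂ) ^ 2 := by
    intro w
    rw [← Complex.ofReal_pow, hnorm]
    push_cast
    rfl
  have hinnerC : ∀ w v : EuclideanSpace ℝ (Fin 2), (((inner ℝ w v : ℝ)) : ℂ) = ∑ i, ((w i : ℝ) : ℂ) * ((v i : ℝ) : ℂ) := by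
    intro w v
    rw [hinner]
    push_cast
    rfl
  have h1 : ∀ v : Fin 2 → ℝ,
      Complex.exp (-B * ((‖((MeasurableEquiv.toLp 2 (Fin 2 → ℝ)).symm.symm v : EuclideanSpace ℝ (Fin 2))‖ : ℝ) : ℂ) ^ 2
        + (c₁ * (((inner ℝ w₁ ((MeasurableEquiv.toLp 2 (Fin 2 → ℝ)).symm.symm v) : ℝ)) : ℂ)
          + c₂ * (((inner ℝ w₂ ((MeasurableEquiv.toLp 2 (Fin 2 → ℝ)).symm.symm v) : ℝ)) : ℂ)))
      = Complex.exp (-∑ i, B * (v i : ℂ) ^ 2 + ∑ i, (c₁ * (w₁ i : ℂ) + c₂ * (w₂ i : ℂ)) * (v i : ℂ)) := by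
    intro v
    congr 1
    rw [hnormC, hinnerC, hinnerC]
    rw [Fin.sum_univ_two, Fin.sum_univ_two, Fin.sum_univ_two, Fin.sum_univ_two, Fin.sum_univ_two]
    have hv : ∀ i, ((MeasurableEquiv.toLp 2 (Fin 2 → ℝ)).symm.symm v) i = v i := fun i => rfl
    simp only [hv]
    ring
  simp only [Function.comp_def, h1]
  rw [key, Fin.prod_univ_two]
  have hpb : ((π : ℂ) / B) ^ (1/2 : ℂ) * ((π : ℂ) / B) ^ (1/2 : ℂ) = (π : ℂ) / B := by
    rw [← Complex.cpow_add _ _ (div_ne_zero (by exact_mod_cast Real.pi_ne_zero) hBne)]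
    norm_num
  rw [show ∀ A C D : ℂ, A * C * (A * D) = (A * A) * (C * D) from fun A C D => by ring]
  rw [hpb, ← Complex.exp_add]
  congr 1
  rw [hnormC, hnormC, hinnerC, Fin.sum_univ_two, Fin.sum_univ_two, Fin.sum_univ_two]
  field_simp
  ring

/-- Gaussian aperture integral over `ℝ²` with complex quadratic phase. -/
theorem gaussian_aperture_integral
    (b_eff L L_y ω c₀ : ℝ)
    (hb : 0 < b_eff) (hL : 0 < L) (hLy : L < L_y) (hω : 0 < ω) (hc : 0 < c₀)
    (xq y : EuclideanSpace ℝ (Fin 2))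
    (α β : ℝ)
    (hα : α = ω ^ 2 * b_eff ^ 2 / (4 * c₀ ^ 2 * L ^ 2))
    (hβ : β = ω * L_y / (2 * c₀ * L * (L_y - L))) :
    (∫ x : EuclideanSpace ℝ (Fin 2),
        Complex.exp (Complex.I * (ω : ℂ) * ((‖y - x‖ ^ 2 : ℝ) : ℂ) /
            (2 * (c₀ : ℂ) * ((L_y : ℂ) - (L : ℂ))))
          * Complex.exp (Complex.I * (ω : ℂ) * (((‖x‖ ^ 2 - ‖xq‖ ^ 2 : ℝ)) : ℂ) /
            (2 * (c₀ : ℂ) * (L : ℂ)))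
          * Complex.exp (-(α : ℂ) * ((‖x - xq‖ ^ 2 : ℝ) : ℂ)))
      = (π : ℂ) / ((α : ℂ) - Complex.I * (β : ℂ))
          * Complex.exp (
              -(((ω ^ 2 / (4 * c₀ ^ 2) : ℝ) : ℂ)
                  * ((‖(1 / L) • xq + (1 / (L_y - L)) • (xq - y)‖ ^ 2 : ℝ) : ℂ))
                / ((α : ℂ) - Complex.I * (β : ℂ))
              + Complex.I * (ω : ℂ) * ((‖xq - y‖ ^ 2 : ℝ) : ℂ)
                / (2 * (c₀ : ℂ) * ((L_y : ℂ) - (L : ℂ)))) := by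
  have hLL : (0:ℝ) < L_y - L := sub_pos.mpr hLy
  have hα0 : 0 < α := by rw [hα]; positivity
  have hc0 : (c₀:ℂ) ≠ 0 := by exact_mod_cast hc.ne'
  have hL0 : (L:ℂ) ≠ 0 := by exact_mod_cast hL.ne'
  have hLL0 : ((L_y:ℂ) - (L:ℂ)) ≠ 0 := by
    rw [show ((L_y:ℂ) - (L:ℂ)) = ((L_y - L : ℝ) : ℂ) by push_cast; ring]
    exact_mod_cast hLL.ne'
  obtain ⟨a, ha⟩ : ∃ a : ℝ, a = ω / (2 * c₀ * (L_y - L)) := ⟨_, rfl⟩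
  obtain ⟨b', hb'⟩ : ∃ b : ℝ, b = ω / (2 * c₀ * L) := ⟨_, rfl⟩
  have ha0 : 0 < a := by rw [ha]; positivity
  have hb'0 : 0 < b' := by rw [hb']; positivity
  have hβ' : β = a + b' := by
    rw [hβ, ha, hb']
    field_simp
    ring
  obtain ⟨B, hBdef⟩ : ∃ B : ℂ, B = (α:ℂ) - Complex.I * (β:ℂ) := ⟨_, rfl⟩
  have hBre : 0 < B.re := by
    rw [hBdef]
    simpa using hα0
  have hBne : B ≠ 0 := fun h => by rw [h] at hBre; simp at hBre
  have hdiv1 : ∀ z : ℂ, Complex.I * (ω:ℂ) * z / (2 * (c₀:ℂ) * ((L_y:ℂ) - (L:ℂ)))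
      = Complex.I * (a:ℂ) * z := by
    intro z
    rw [ha]
    push_cast
    field_simp
  have hdiv2 : ∀ z : ℂ, Complex.I * (ω:ℂ) * z / (2 * (c₀:ℂ) * (L:ℂ))
      = Complex.I * (b':ℂ) * z := by
    intro z
    rw [hb']
    push_cast
    field_simp
  have hpt : ∀ x : EuclideanSpace ℝ (Fin 2),
      Complex.exp (Complex.I * (ω : ℂ) * ((‖y - x‖ ^ 2 : ℝ) : ℂ) /
            (2 * (c₀ : ℂ) * ((L_y : ℂ) - (L : ℂ))))
          * Complex.exp (Complex.I * (ω : ℂ) * (((‖x‖ ^ 2 - ‖xq‖ ^ 2 : ℝ)) : ℂ) /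
            (2 * (c₀ : ℂ) * (L : ℂ)))
          * Complex.exp (-(α : ℂ) * ((‖x - xq‖ ^ 2 : ℝ) : ℂ))
      = Complex.exp (Complex.I*(a:ℂ)*((‖y‖^2 : ℝ):ℂ) - Complex.I*(b':ℂ)*((‖xq‖^2 : ℝ):ℂ)
            - (α:ℂ)*((‖xq‖^2 : ℝ):ℂ)) *
        Complex.exp (-B * ((‖x‖ : ℝ) : ℂ)^2 + ((2*(α:ℂ)) * (((inner ℝ xq x : ℝ) : ℝ):ℂ)
          + (-2*Complex.I*(a:ℂ)) * (((inner ℝ y x : ℝ) : ℝ):ℂ))) := by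
    intro x
    rw [← Complex.exp_add, ← Complex.exp_add, ← Complex.exp_add]
    congr 1
    have h1 : ‖y - x‖^2 = ‖y‖^2 - 2*(inner ℝ y x : ℝ) + ‖x‖^2 := by
      rw [@norm_sub_sq_real]
    have h2 : ‖x - xq‖^2 = ‖x‖^2 - 2*(inner ℝ xq x : ℝ) + ‖xq‖^2 := by
      rw [@norm_sub_sq_real, real_inner_comm]
    rw [h1, h2, hdiv1, hdiv2, hBdef, hβ']
    push_cast
    ring
  simp only [hpt]
  rw [MeasureTheory.integral_const_mul, aux_gauss2 B hBre (2*(α:ℂ)) (-2*Complex.I*(a:ℂ)) xq y]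
  rw [show ∀ (K Q : ℂ), Complex.exp K * ((π:ℂ)/B * Complex.exp Q)
        = (π:ℂ)/B * Complex.exp (K + Q) from fun K Q => by rw [Complex.exp_add]; ring]
  rw [show ((α : ℂ) - Complex.I * (β : ℂ)) = B from hBdef.symm]
  congr 1
  -- exponent identity
  have hd : ‖xq - y‖^2 = ‖xq‖^2 - 2*(inner ℝ xq y : ℝ) + ‖y‖^2 := by
    rw [@norm_sub_sq_real]
  have hu : (ω^2/(4*c₀^2)) * ‖(1 / L) • xq + (1 / (L_y - L)) • (xq - y)‖^2
      = β^2*‖xq‖^2 - 2*β*a*(inner ℝ xq y : ℝ) + a^2*‖y‖^2 := by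
    have hv : (1 / L) • xq + (1 / (L_y - L)) • (xq - y)
        = (1/L + 1/(L_y - L)) • xq - (1/(L_y - L)) • y := by module
    rw [hv, @norm_sub_sq_real, norm_smul, norm_smul, real_inner_smul_left,
      real_inner_smul_right]
    simp only [Real.norm_eq_abs, mul_pow, _root_.sq_abs]
    rw [hβ, ha]
    have h3 : L ≠ 0 := hL.ne'
    have h4 : L_y - L ≠ 0 := hLL.ne'
    have h5 : c₀ ≠ 0 := hc.ne'
    field_simp
    ring
  rw [show -(((ω ^ 2 / (4 * c₀ ^ 2) : ℝ) : ℂ) * ((‖(1 / L) • xq + (1 / (L_y - L)) • (xq - y)‖ ^ 2 : ℝ) : ℂ))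
      = -(((β^2*‖xq‖^2 - 2*β*a*(inner ℝ xq y : ℝ) + a^2*‖y‖^2 : ℝ)) : ℂ) by
        rw [← Complex.ofReal_mul, hu], hd, hdiv1, hBdef, hβ']
  push_cast
  congr 1
  have hBne' : ((α:ℂ) - Complex.I * ((a:ℂ) + (b':ℂ))) ≠ 0 := by
    rw [show ((α:ℂ) - Complex.I * ((a:ℂ) + (b':ℂ))) = B by rw [hBdef, hβ']; push_cast; ring]
    exact hBne
  field_simp [hBne']
  have hi : ((inner ℝ xq y : ℝ) : ℂ) = ((xq 0 : ℝ):ℂ)*((y 0 : ℝ):ℂ) + ((xq 1 : ℝ):ℂ)*((y 1 : ℝ):ℂ) := by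
    simp [PiLp.inner_apply, Fin.sum_univ_two, mul_comm]
  rw [hi]
  ring_nf
  simp only [Complex.I_sq]
  ring_nf
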